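/- (Combes–Thomas bound.) Let 𝒥 be a bounded self-adjoint Jacobi matrix on ℓ²(ℤ) with |𝒥_{k,k+1}| ≤ A. Then for z ∈ ℂ with Im z ≠ 0 and |Im z| sufficiently small (depending on A), the resolvent R(z) = (𝒥 − z)^{−1} satisfies |R_{k,j}(z)| ≤ (2/|Im z|) e^{−C|Im z||k−j|} for a constant C > 0 depending only on A. -/

import Mathlib

open Complex
open scoped ENNReal

local notation "H" => lp (fun _ : ℤ => ℂ) 2

noncomputable section CTaux
namespace CTaux

local notation "⟪" x ", " y "⟫" => @inner ℂ _ _ x y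

/-- Evaluation at a point as a continuous linear map on ℓ². -/
def eval (n : ℤ) : H →L[ℂ] ℂ :=
  LinearMap.mkContinuous
    { toFun := fun f => f n
      map_add' := fun f g => by simp [lp.coeFn_add]
      map_smul' := fun c f => by simp [lp.coeFn_smul] }
    1
    (fun f => by rw [one_mul]; exact lp.norm_apply_le_norm (by norm_num) f n)

@[simp] theorem eval_apply (n : ℤ) (f : H) : eval n f = f n := rfl

theorem hasSum_apply (T : H →L[ℂ] H) (f : H) (n : ℤ) :
    HasSum (fun m : ℤ => f m * ((T (lp.single 2 m 1)) : ℤ → ℂ) n) (((T f) : ℤ → ℂ) n) := by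
  have h1 : HasSum (fun m : ℤ => lp.single 2 m (f m)) f := lp.hasSum_single ENNReal.ofNat_ne_top f
  have h2 := (h1.mapL T).mapL (eval n)
  convert h2 using 2 with m
  have hs : (lp.single 2 m (f m) : H) = f m • (lp.single 2 m (1 : ℂ) : H) := by
    rw [← lp.single_smul (E := fun _ : ℤ => ℂ) 2 m (f m) (1 : ℂ), smul_eq_mul, mul_one]
  rw [hs, map_smul, eval_apply, lp.coeFn_smul, Pi.smul_apply, smul_eq_mul]
  rfl

theorem apply_eq (T : H →L[ℂ] H)
    (hT0 : ∀ k j : ℤ, 1 < |k - j| → ((T (lp.single 2 j 1)) : ℤ → ℂ) k = 0)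
    (f : H) (n : ℤ) :
    ((T f) : ℤ → ℂ) n =
      f (n-1) * ((T (lp.single 2 (n-1) 1)) : ℤ → ℂ) n
      + f n * ((T (lp.single 2 n 1)) : ℤ → ℂ) n
      + f (n+1) * ((T (lp.single 2 (n+1) 1)) : ℤ → ℂ) n := by
  have h := hasSum_apply T f n
  have h2 : HasSum (fun m : ℤ => f m * ((T (lp.single 2 m 1)) : ℤ → ℂ) n)
      (∑ m ∈ ({n-1, n, n+1} : Finset ℤ), f m * ((T (lp.single 2 m 1)) : ℤ → ℂ) n) := by
    apply hasSum_sum_of_ne_finset_zero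
    intro m hm
    simp only [Finset.mem_insert, Finset.mem_singleton] at hm
    push_neg at hm
    rw [hT0 n m (by rw [lt_abs]; omega), mul_zero]
  rw [h.unique h2]
  rw [Finset.sum_insert (by simp only [Finset.mem_insert, Finset.mem_singleton]; omega),
    Finset.sum_insert (by simp only [Finset.mem_singleton]; omega), Finset.sum_singleton]
  ring

theorem entry_symm (T : H →L[ℂ] H) (hsa : IsSelfAdjoint T) (n m : ℤ) :
    ((T (lp.single 2 m 1)) : ℤ → ℂ) n =
      (starRingEnd ℂ) (((T (lp.single 2 n 1)) : ℤ → ℂ) m) := by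
  have hs := hsa.isSymmetric
  have h1 := hs (lp.single 2 n 1) (lp.single 2 m 1)
  rw [← inner_conj_symm] at h1
  rw [lp.inner_single_left, lp.inner_single_left] at h1
  simp only [RCLike.inner_apply, map_one, one_mul, mul_one, ContinuousLinearMap.coe_coe] at h1
  exact h1.symm

theorem exp_ratio {η t : ℝ} (ht : |t| ≤ η) :
    |Real.exp t - 1| ≤ Real.exp η - 1 := by
  rw [abs_le] at ht ⊢
  have hmul : Real.exp η * Real.exp (-η) = 1 := by rw [← Real.exp_add]; simp
  have h1 : Real.exp t ≤ Real.exp η := Real.exp_le_exp.mpr ht.2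
  have h2 : Real.exp (-η) ≤ Real.exp t := Real.exp_le_exp.mpr (by linarith [ht.1])
  constructor
  · nlinarith [Real.exp_pos η, sq_nonneg (Real.exp η - 1)]
  · linarith

theorem exp_sub_one_le {η : ℝ} (hη : 0 ≤ η) (hη2 : η ≤ 1/2) :
    Real.exp η - 1 ≤ 2 * η := by
  have hmul : Real.exp η * Real.exp (-η) = 1 := by rw [← Real.exp_add]; simp
  nlinarith [Real.add_one_le_exp (-η), Real.exp_pos η]

end CTaux
end CTaux

open CTaux

set_option maxHeartbeats 3000000 in
/-- Combes–Thomas bound for bounded self-adjoint Jacobi matrices on `ℓ²(ℤ)`: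
if the off-diagonal entries are bounded by `A`, then for `z` with small nonzero
imaginary part any (two-sided) resolvent `R = (𝒥 − z)⁻¹` satisfies
`|R_{k,j}(z)| ≤ (2/|Im z|) e^{−C|Im z||k−j|}`. -/
theorem combes_thomas_bound (A : ℝ) (hA : 0 < A) :
    ∃ ε C : ℝ, 0 < ε ∧ 0 < C ∧
      ∀ T : lp (fun _ : ℤ => ℂ) 2 →L[ℂ] lp (fun _ : ℤ => ℂ) 2,
        IsSelfAdjoint T →
        (∀ k j : ℤ, 1 < |k - j| → ((T (lp.single 2 j 1)) : ℤ → ℂ) k = 0) →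
        (∀ k : ℤ, ‖((T (lp.single 2 k 1)) : ℤ → ℂ) (k + 1)‖ ≤ A) →
      ∀ z : ℂ, z.im ≠ 0 → |z.im| < ε →
      ∀ R : lp (fun _ : ℤ => ℂ) 2 →L[ℂ] lp (fun _ : ℤ => ℂ) 2,
        (T - z • 1) ∘L R = 1 → R ∘L (T - z • 1) = 1 →
      ∀ k j : ℤ,
        ‖((R (lp.single 2 j 1)) : ℤ → ℂ) k‖
          ≤ (2 / |z.im|) * Real.exp (-C * |z.im| * |(k : ℝ) - j|) := by
  classical
  refine ⟨4*A, 1/(8*A), by linarith, by positivity, ?_⟩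
  intro T hsa hT0 hTA z hz hzε R hRT _hTR k j
  set η : ℝ := |z.im| / (8*A) with hη_def
  have him : 0 < |z.im| := abs_pos.mpr hz
  have hη0 : 0 < η := by positivity
  have hη2 : η < 1/2 := by
    rw [hη_def, div_lt_iff₀ (by linarith)]; linarith
  have hE0 : 0 ≤ Real.exp η - 1 := by
    have := Real.one_le_exp hη0.le; linarith
  have hexpη : Real.exp η - 1 ≤ 2*η := exp_sub_one_le hη0.le hη2.le
  -- the weight
  set φ : ℤ → ℕ := fun n => min (n - j).natAbs (k - j).natAbs with hφ_def
  set w : ℤ → ℝ := fun n => Real.exp (η * φ n) with hw_def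
  have hw_pos : ∀ n, 0 < w n := fun n => Real.exp_pos _
  have hwj : w j = 1 := by simp [hw_def, hφ_def]
  have hw_diff : ∀ n m : ℤ, (m = n + 1 ∨ m = n - 1) → |w n - w m| ≤ (Real.exp η - 1) * w m := by
    intro n m hm
    have hlip : |(φ n : ℝ) - (φ m : ℝ)| ≤ 1 := by
      have h1 : φ m ≤ φ n + 1 ∧ φ n ≤ φ m + 1 := by
        simp only [hφ_def]
        rcases hm with rfl | rfl <;> constructor <;> omega
      have h2 : (φ m : ℝ) ≤ (φ n : ℝ) + 1 := by exact_mod_cast h1.1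
      have h3 : (φ n : ℝ) ≤ (φ m : ℝ) + 1 := by exact_mod_cast h1.2
      rw [abs_le]
      constructor <;> linarith
    have hwe : w n = w m * Real.exp (η * ((φ n : ℝ) - (φ m : ℝ))) := by
      rw [hw_def]; dsimp only; rw [← Real.exp_add]; ring_nf
    rw [hwe]
    have : w m * Real.exp (η * ((φ n : ℝ) - (φ m : ℝ))) - w m
        = w m * (Real.exp (η * ((φ n : ℝ) - (φ m : ℝ))) - 1) := by ring
    rw [this, abs_mul, abs_of_pos (hw_pos m)]
    rw [mul_comm ((Real.exp η - 1)) (w m)]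
    apply mul_le_mul_of_nonneg_left _ (hw_pos m).le
    apply exp_ratio
    rw [abs_mul, abs_of_pos hη0]
    calc η * |(φ n : ℝ) - (φ m : ℝ)| ≤ η * 1 := by
          exact mul_le_mul_of_nonneg_left hlip hη0.le
      _ = η := mul_one η
  -- the resolvent vector
  set ψ : lp (fun _ : ℤ => ℂ) 2 := R (lp.single 2 j 1) with hψ_def
  have hψ1 : T ψ - z • ψ = lp.single 2 j 1 := by
    have h := congrArg (fun S : H →L[ℂ] H => S (lp.single 2 j 1)) hRT
    simpa [ContinuousLinearMap.comp_apply, ContinuousLinearMap.sub_apply,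
      ContinuousLinearMap.smul_apply, ContinuousLinearMap.one_apply] using h
  have hψeq : ∀ n : ℤ, ((T ψ) : ℤ → ℂ) n = z * ψ n + (lp.single 2 j (1:ℂ) : ℤ → ℂ) n := by
    intro n
    have h := congrArg (fun f : H => (f : ℤ → ℂ) n) hψ1
    simp only [lp.coeFn_sub, Pi.sub_apply, lp.coeFn_smul, Pi.smul_apply, smul_eq_mul] at h
    linear_combination h
  -- the weighted vector
  set u : ℤ → ℂ := fun n => ((w n : ℝ) : ℂ) * ψ n with hu_def
  have hnorm_u : ∀ n, ‖u n‖ = w n * ‖ψ n‖ := by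
    intro n
    rw [hu_def]; dsimp only
    rw [norm_mul, Complex.norm_real, Real.norm_eq_abs, abs_of_pos (hw_pos n)]
  have hψ2 : Summable (fun n : ℤ => ‖ψ n‖^2) := by
    have h := (memℓp_gen_iff (p := 2) (by norm_num)).mp (lp.memℓp ψ)
    convert h using 2 with n
    rw [show ((2:ℝ≥0∞).toReal) = ((2:ℕ):ℝ) by norm_num, Real.rpow_natCast]
  have hwK : ∀ n, w n ≤ Real.exp (η * (k - j).natAbs) := by
    intro n
    rw [hw_def]; dsimp only
    apply Real.exp_le_exp.mpr
    apply mul_le_mul_of_nonneg_left _ hη0.le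
    exact_mod_cast Nat.cast_le.mpr (min_le_right _ _)
  have hu2 : Memℓp u 2 := by
    apply memℓp_gen
    have hb : ∀ n : ℤ, ‖u n‖ ^ ((2:ℝ≥0∞).toReal)
        ≤ (Real.exp (η * (k - j).natAbs))^2 * ‖ψ n‖^2 := by
      intro n
      rw [show ((2:ℝ≥0∞).toReal) = ((2:ℕ):ℝ) by norm_num, Real.rpow_natCast, hnorm_u n]
      have := hwK n
      have h1 : 0 ≤ w n := (hw_pos n).le
      have h2 : 0 ≤ ‖ψ n‖ := norm_nonneg _
      nlinarith [sq_nonneg ‖ψ n‖, mul_le_mul this this h1 (le_trans h1 this), sq_nonneg (w n * ‖ψ n‖)]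
    exact Summable.of_nonneg_of_le
      (fun n => Real.rpow_nonneg (norm_nonneg _) _) hb (hψ2.mul_left _)
  set U : lp (fun _ : ℤ => ℂ) 2 := ⟨u, hu2⟩ with hU_def
  have hUapp : ∀ n, (U : ℤ → ℂ) n = u n := fun n => rfl
  set N2 : ℝ := ‖U‖^2 with hN2_def
  have hN2_nonneg : 0 ≤ N2 := sq_nonneg _
  have hsum_u : Summable (fun n : ℤ => ‖u n‖^2) := by
    have h := (memℓp_gen_iff (p := 2) (by norm_num)).mp hu2
    convert h using 2 with n
    rw [show ((2:ℝ≥0∞).toReal) = ((2:ℕ):ℝ) by norm_num, Real.rpow_natCast]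
  have htsum_u : ∑' n : ℤ, ‖u n‖^2 = N2 := by
    have h := lp.norm_rpow_eq_tsum (p := 2) (by norm_num) U
    rw [hN2_def]
    rw [show ((2:ℝ≥0∞).toReal) = ((2:ℕ):ℝ) by norm_num] at h
    simp only [Real.rpow_natCast] at h
    rw [← h]
  have hsum_um : Summable (fun n : ℤ => ‖u (n-1)‖^2) :=
    ((Equiv.subRight (1:ℤ)).summable_iff (f := fun n => ‖u n‖^2)).mpr hsum_u
  have hsum_up : Summable (fun n : ℤ => ‖u (n+1)‖^2) :=
    ((Equiv.addRight (1:ℤ)).summable_iff (f := fun n => ‖u n‖^2)).mpr hsum_u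
  have htsum_um : ∑' n : ℤ, ‖u (n-1)‖^2 = N2 := by
    rw [← htsum_u]; exact (Equiv.subRight (1:ℤ)).tsum_eq (fun n => ‖u n‖^2)
  have htsum_up : ∑' n : ℤ, ‖u (n+1)‖^2 = N2 := by
    rw [← htsum_u]; exact (Equiv.addRight (1:ℤ)).tsum_eq (fun n => ‖u n‖^2)
  -- entry bounds
  have haA : ∀ n : ℤ, ‖((T (lp.single 2 (n-1) 1)) : ℤ → ℂ) n‖ ≤ A := by
    intro n
    have h := hTA (n-1)
    rwa [sub_add_cancel] at h
  have hcA : ∀ n : ℤ, ‖((T (lp.single 2 (n+1) 1)) : ℤ → ℂ) n‖ ≤ A := by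
    intro n
    rw [entry_symm T hsa n (n+1), RCLike.norm_conj]
    exact hTA n
  -- key identity
  have hkey : ∀ n : ℤ, ((T U) : ℤ → ℂ) n - z * u n
      = (lp.single 2 j (1:ℂ) : ℤ → ℂ) n * ((w n : ℝ) : ℂ)
        + (((T (lp.single 2 (n-1) 1)) : ℤ → ℂ) n * (((w (n-1) : ℝ) : ℂ) - ((w n : ℝ) : ℂ)) * ψ (n-1)
          + ((T (lp.single 2 (n+1) 1)) : ℤ → ℂ) n * (((w (n+1) : ℝ) : ℂ) - ((w n : ℝ) : ℂ)) * ψ (n+1)) := by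
    intro n
    have hU := apply_eq T hT0 U n
    have hψn := apply_eq T hT0 ψ n
    rw [hψeq n] at hψn
    rw [hU]
    simp only [hUapp, hu_def]
    linear_combination (-((w n : ℝ) : ℂ)) * hψn
  set b : ℤ → ℂ := fun n =>
      ((T (lp.single 2 (n-1) 1)) : ℤ → ℂ) n * (((w (n-1) : ℝ) : ℂ) - ((w n : ℝ) : ℂ)) * ψ (n-1)
      + ((T (lp.single 2 (n+1) 1)) : ℤ → ℂ) n * (((w (n+1) : ℝ) : ℂ) - ((w n : ℝ) : ℂ)) * ψ (n+1)
    with hb_def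
  -- bound on b
  have hb_bound : ∀ n : ℤ, ‖b n‖ ≤ A * (Real.exp η - 1) * (‖u (n-1)‖ + ‖u (n+1)‖) := by
    intro n
    rw [hb_def]; dsimp only
    have hterm : ∀ m : ℤ, (m = n + 1 ∨ m = n - 1) →
        ∀ X : ℂ, ‖X‖ ≤ A →
        ‖X * (((w m : ℝ) : ℂ) - ((w n : ℝ) : ℂ)) * ψ m‖ ≤ A * (Real.exp η - 1) * ‖u m‖ := by
      intro m hm X hX
      rw [norm_mul, norm_mul]
      have h1 : ‖(((w m : ℝ) : ℂ) - ((w n : ℝ) : ℂ))‖ = |w m - w n| := by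
        rw [← Complex.ofReal_sub, Complex.norm_real, Real.norm_eq_abs]
      rw [h1, hnorm_u m, abs_sub_comm]
      have h2 := hw_diff n m hm
      have h3 : 0 ≤ ‖ψ m‖ := norm_nonneg _
      have h4 : 0 ≤ ‖X‖ := norm_nonneg _
      have h5 : 0 ≤ |w n - w m| := abs_nonneg _
      nlinarith [mul_le_mul_of_nonneg_right (mul_le_mul hX h2 h5 hA.le) h3]
    calc ‖_ + _‖ ≤ ‖((T (lp.single 2 (n-1) 1)) : ℤ → ℂ) n * (((w (n-1) : ℝ) : ℂ) - ((w n : ℝ) : ℂ)) * ψ (n-1)‖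
            + ‖((T (lp.single 2 (n+1) 1)) : ℤ → ℂ) n * (((w (n+1) : ℝ) : ℂ) - ((w n : ℝ) : ℂ)) * ψ (n+1)‖ :=
          norm_add_le _ _
      _ ≤ A * (Real.exp η - 1) * ‖u (n-1)‖ + A * (Real.exp η - 1) * ‖u (n+1)‖ := by
          gcongr <;> [exact hterm (n-1) (Or.inr rfl) _ (haA n); exact hterm (n+1) (Or.inl rfl) _ (hcA n)]
      _ = A * (Real.exp η - 1) * (‖u (n-1)‖ + ‖u (n+1)‖) := by ring
  -- the inner product S = ⟪U, T U - z • U⟫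
  set V : lp (fun _ : ℤ => ℂ) 2 := T U - z • U with hV_def
  have hVapp : ∀ n : ℤ, (V : ℤ → ℂ) n = ((T U) : ℤ → ℂ) n - z * u n := by
    intro n
    rw [hV_def]
    simp only [lp.coeFn_sub, Pi.sub_apply, lp.coeFn_smul, Pi.smul_apply, smul_eq_mul, hUapp]
  have hS : (inner ℂ U V) = ∑' n : ℤ, (starRingEnd ℂ) (u n) * (((T U) : ℤ → ℂ) n - z * u n) := by
    rw [lp.inner_eq_tsum]
    exact tsum_congr fun n => by rw [RCLike.inner_apply, hVapp n, hUapp, mul_comm]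
  set F : ℤ → ℂ := fun n =>
      (starRingEnd ℂ) (u n) * ((lp.single 2 j (1:ℂ) : ℤ → ℂ) n * ((w n : ℝ) : ℂ)) with hF_def
  set G : ℤ → ℂ := fun n => (starRingEnd ℂ) (u n) * b n with hG_def
  have hF0 : ∀ n ∉ ({j} : Finset ℤ), F n = 0 := by
    intro n hn
    simp only [Finset.mem_singleton] at hn
    rw [hF_def]; dsimp only
    rw [lp.single_apply_ne 2 j _ hn]
    ring
  have hFsum : Summable F := summable_of_ne_finset_zero hF0
  have htsumF : ∑' n, F n = (starRingEnd ℂ) (u j) := by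
    rw [tsum_eq_single j (fun n hn => hF0 n (by simpa using hn))]
    rw [hF_def]; dsimp only
    rw [lp.single_apply_self, hwj]
    norm_num
  have hAE : 0 ≤ A * (Real.exp η - 1) := mul_nonneg hA.le hE0
  set g : ℤ → ℝ := fun n =>
      (A * (Real.exp η - 1)) * (‖u n‖^2 + (‖u (n-1)‖^2 + ‖u (n+1)‖^2)/2) with hg_def
  have hGg : ∀ n, ‖G n‖ ≤ g n := by
    intro n
    rw [hG_def, hg_def]; dsimp only
    rw [norm_mul, RCLike.norm_conj]
    have h2 : ‖u n‖ * ‖b n‖ ≤ ‖u n‖ * (A * (Real.exp η - 1) * (‖u (n-1)‖ + ‖u (n+1)‖)) :=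
      mul_le_mul_of_nonneg_left (hb_bound n) (norm_nonneg _)
    nlinarith [sq_nonneg (‖u n‖ - ‖u (n-1)‖), sq_nonneg (‖u n‖ - ‖u (n+1)‖), hAE]
  have hg_sum : Summable g := ((hsum_u.add ((hsum_um.add hsum_up).div_const 2)).mul_left _)
  have htsum_g : ∑' n, g n = (A * (Real.exp η - 1)) * (2 * N2) := by
    rw [hg_def, tsum_mul_left, Summable.tsum_add hsum_u ((hsum_um.add hsum_up).div_const 2),
      tsum_div_const, Summable.tsum_add hsum_um hsum_up, htsum_u, htsum_um, htsum_up]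
    ring
  have hGnorm_sum : Summable (fun n => ‖G n‖) :=
    Summable.of_nonneg_of_le (fun n => norm_nonneg _) hGg hg_sum
  have hGsum : Summable G := Summable.of_norm hGnorm_sum
  have htsumS : (inner ℂ U V) = (starRingEnd ℂ) (u j) + ∑' n, G n := by
    rw [hS]
    have hsplit : ∀ n : ℤ, (starRingEnd ℂ) (u n) * (((T U) : ℤ → ℂ) n - z * u n) = F n + G n := by
      intro n
      rw [hkey n, hF_def, hG_def]; dsimp only
      ring
    rw [tsum_congr hsplit, Summable.tsum_add hFsum hGsum, htsumF]
  -- imaginary part of S, computed two ways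
  have hself : (inner ℂ U (T U)).im = 0 := by
    have h1 : (inner ℂ (T U) U) = inner ℂ U (T U) := hsa.isSymmetric U U
    have h2 : (starRingEnd ℂ) (inner ℂ U (T U)) = inner ℂ U (T U) := by
      rw [inner_conj_symm]; exact h1
    exact Complex.conj_eq_iff_im.mp h2
  have hSim : (inner ℂ U V).im = - (z.im * N2) := by
    rw [hV_def, inner_sub_right, inner_smul_right]
    have him0 : (inner ℂ U U).im = 0 := inner_self_im (𝕜 := ℂ) U
    have hre0 : (inner ℂ U U).re = N2 := by
      rw [hN2_def]; exact inner_self_eq_norm_sq (𝕜 := ℂ) U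
    rw [Complex.sub_im, Complex.mul_im, hself, him0, hre0]
    ring
  have hub : |(∑' n, G n).im| ≤ (A * (Real.exp η - 1)) * (2 * N2) := by
    calc |(∑' n, G n).im| ≤ ‖∑' n, G n‖ := by
          exact Complex.abs_im_le_norm _
      _ ≤ ∑' n, ‖G n‖ := norm_tsum_le_tsum_norm hGnorm_sum
      _ ≤ ∑' n, g n := Summable.tsum_le_tsum hGg hGnorm_sum hg_sum
      _ = _ := htsum_g
  have hujU : ‖u j‖ ≤ ‖U‖ := by
    have h := lp.norm_apply_le_norm (by norm_num : (2:ℝ≥0∞) ≠ 0) U j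
    simpa [hUapp] using h
  have hmain : |z.im| * N2 ≤ ‖U‖ + |z.im| / 2 * N2 := by
    have h1 : |(inner ℂ U V).im| = |z.im| * N2 := by
      rw [hSim, abs_neg, abs_mul, _root_.abs_of_nonneg hN2_nonneg]
    have h2 : |((starRingEnd ℂ) (u j)).im| ≤ ‖u j‖ := by
      rw [← RCLike.norm_conj (u j)]
      exact Complex.abs_im_le_norm _
    have h3 : (inner ℂ U V).im = ((starRingEnd ℂ) (u j)).im + (∑' n, G n).im := by
      rw [htsumS]; simp
    have h4 : (A * (Real.exp η - 1)) * (2 * N2) ≤ |z.im| / 2 * N2 := by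
      have h5 : A * (Real.exp η - 1) ≤ A * (2 * η) := mul_le_mul_of_nonneg_left hexpη hA.le
      have h6 : A * (2 * η) * 2 = |z.im| / 2 := by rw [hη_def]; field_simp; ring
      nlinarith [hN2_nonneg]
    calc |z.im| * N2 = |(inner ℂ U V).im| := h1.symm
      _ ≤ |((starRingEnd ℂ) (u j)).im| + |(∑' n, G n).im| := by rw [h3]; exact abs_add_le _ _
      _ ≤ ‖u j‖ + (A * (Real.exp η - 1)) * (2 * N2) := add_le_add h2 hub
      _ ≤ ‖U‖ + |z.im| / 2 * N2 := add_le_add hujU h4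
  have hnormU : ‖U‖ ≤ 2 / |z.im| := by
    rcases eq_or_lt_of_le (norm_nonneg U) with h0 | h0
    · rw [← h0]; positivity
    · rw [le_div_iff₀ him]
      have hN2U : N2 = ‖U‖^2 := hN2_def
      nlinarith [hmain]
  -- conclusion
  have hφk : ((φ k : ℕ) : ℝ) = |(k:ℝ) - (j:ℝ)| := by
    rw [hφ_def]; dsimp only
    rw [min_self, Nat.cast_natAbs]
    push_cast
    ring_nf
  have harg : -(1/(8*A)) * |z.im| * |(k:ℝ) - (j:ℝ)| = -(η * ((φ k : ℕ) : ℝ)) := by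
    rw [hφk, hη_def]; field_simp
  have hukU : ‖u k‖ ≤ ‖U‖ := by
    have h := lp.norm_apply_le_norm (by norm_num : (2:ℝ≥0∞) ≠ 0) U k
    simpa [hUapp] using h
  have hk1 : w k * ‖ψ k‖ ≤ 2 / |z.im| := by
    rw [← hnorm_u k]; exact le_trans hukU hnormU
  have hwk : w k = Real.exp (η * ((φ k : ℕ) : ℝ)) := by rw [hw_def]
  calc ‖ψ k‖ = (w k * ‖ψ k‖) * (Real.exp (η * ((φ k : ℕ) : ℝ)))⁻¹ := by
        rw [hwk]
        field_simp
    _ ≤ (2 / |z.im|) * (Real.exp (η * ((φ k : ℕ) : ℝ)))⁻¹ := by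
        apply mul_le_mul_of_nonneg_right hk1
        positivity
    _ = (2 / |z.im|) * Real.exp (-(1/(8*A)) * |z.im| * |(k:ℝ) - (j:ℝ)|) := by
        rw [harg, Real.exp_neg]
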